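/- Let R be a valuation domain, and let p₁ ⊆ p₂ ⊆ p₁' ⊆ p₂' be prime ideals of R. Then the square of canonical ring homomorphisms from R_{p₂'}/p₁ to R_{p₁'}/p₁, R_{p₂'}/p₂, and with both latter mapping to R_{p₁'}/p₂, is a pullback square of rings: given r₁ ∈ R_{p₁'}/p₁ and r₂ ∈ R_{p₂'}/p₂ with equal images in R_{p₁'}/p₂, there is a unique r ∈ R_{p₂'}/p₁ mapping to r₁ and r₂ respectively. -/

import Mathlib

universe u

variable (R : Type u) [CommRing R]

/-- The canonical map between localizations `R_q → R_q'` for primes `q' ≤ q`. -/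
noncomputable def locMap (q q' : Ideal R) [q.IsPrime] [q'.IsPrime] (hq : q' ≤ q) :
    Localization.AtPrime q →+* Localization.AtPrime q' :=
  IsLocalization.map (M := q.primeCompl) (T := q'.primeCompl) (Localization.AtPrime q')
    (RingHom.id R) (fun x hx h => hx (hq h))

/-- The canonical map `R_q/p → R_{q'}/p'` for primes `p ≤ p'` and `q' ≤ q`. -/
noncomputable def vmap (p p' q q' : Ideal R) [q.IsPrime] [q'.IsPrime]
    (hq : q' ≤ q) (hp : p ≤ p') :
    (Localization.AtPrime q ⧸ p.map (algebraMap R (Localization.AtPrime q))) →+*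
      (Localization.AtPrime q' ⧸ p'.map (algebraMap R (Localization.AtPrime q'))) :=
  Ideal.Quotient.lift _
    ((Ideal.Quotient.mk (p'.map (algebraMap R (Localization.AtPrime q')))).comp
      (locMap R q q' hq))
    (fun a ha => by
      have hle : p.map (algebraMap R (Localization.AtPrime q)) ≤
          RingHom.ker ((Ideal.Quotient.mk
              (p'.map (algebraMap R (Localization.AtPrime q')))).comp (locMap R q q' hq)) := by
        rw [Ideal.map_le_iff_le_comap]
        intro x hx
        rw [Ideal.mem_comap, RingHom.mem_ker, RingHom.comp_apply]
        have hx' : locMap R q q' hq (algebraMap R (Localization.AtPrime q) x) =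
            algebraMap R (Localization.AtPrime q') x := by
          simp only [locMap]; exact IsLocalization.map_eq _ _
        rw [hx']
        exact Ideal.Quotient.eq_zero_iff_mem.mpr (Ideal.mem_map_of_mem _ (hp hx))
      exact hle ha)



section Aux
lemma vmap_mk (p p' q q' : Ideal R) [q.IsPrime] [q'.IsPrime] (hq : q' ≤ q) (hp : p ≤ p')
    (x : Localization.AtPrime q) :
    vmap R p p' q q' hq hp (Ideal.Quotient.mk _ x) = Ideal.Quotient.mk _ (locMap R q q' hq x) :=
  rfl

lemma locMap_mk' (q q' : Ideal R) [q.IsPrime] [q'.IsPrime] (hq : q' ≤ q) (r : R)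
    (s : q.primeCompl) :
    locMap R q q' hq (IsLocalization.mk' _ r s) = IsLocalization.mk' (Localization.AtPrime q')
      ((RingHom.id R) r) (⟨(RingHom.id R) s, fun h => s.2 (hq h)⟩ : q'.primeCompl) :=
  IsLocalization.map_mk' _ _ _
variable [IsDomain R] [ValuationRing R]

lemma divAux (p q : Ideal R) [p.IsPrime] [q.IsPrime] (hpq : p ≤ q)
    {b s : R} (hb : b ∈ p) (hs : s ∉ q) : ∃ c ∈ p, s * c = b := by
  obtain ⟨c, hc | hc⟩ := ValuationRing.cond s b
  · refine ⟨c, ?_, hc⟩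
    have : s * c ∈ p := hc ▸ hb
    rcases (Ideal.IsPrime.mem_or_mem ‹p.IsPrime› this) with h | h
    · exact absurd (hpq h) hs
    · exact h
  · exact absurd (hpq (hc ▸ p.mul_mem_right c hb)) hs

lemma memMapAux (p q : Ideal R) [p.IsPrime] [q.IsPrime] (hpq : p ≤ q)
    {x : Localization.AtPrime q} (hx : x ∈ p.map (algebraMap R (Localization.AtPrime q))) :
    ∃ b ∈ p, algebraMap R (Localization.AtPrime q) b = x := by
  rw [Ideal.map, Ideal.span] at hx
  refine Submodule.span_induction (fun y hy => ?_) ⟨0, p.zero_mem, map_zero _⟩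
    (fun y z _ _ ⟨b, hb, hby⟩ ⟨c, hc, hcz⟩ =>
      ⟨b + c, p.add_mem hb hc, by rw [map_add, hby, hcz]⟩) (fun a y _ ⟨b, hb, hby⟩ => ?_) hx
  · obtain ⟨b, hb, rfl⟩ := hy
    exact ⟨b, hb, rfl⟩
  · obtain ⟨r, s, rfl⟩ := IsLocalization.exists_mk'_eq q.primeCompl a
    obtain ⟨c, hc, hsc⟩ := divAux R p q hpq (p.mul_mem_left r hb) s.2
    refine ⟨c, hc, ?_⟩
    rw [smul_eq_mul, ← hby, mul_comm, IsLocalization.mul_mk'_eq_mk'_of_mul,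
      IsLocalization.eq_mk'_iff_mul_eq, ← map_mul]
    exact congrArg _ ((mul_comm c _).trans (hsc.trans (mul_comm r b)))

lemma kerAux (p q q' : Ideal R) [p.IsPrime] [q.IsPrime] [q'.IsPrime]
    (hpq : p ≤ q') (hq : q' ≤ q)
    {x : Localization.AtPrime q}
    (hx : locMap R q q' hq x ∈ p.map (algebraMap R (Localization.AtPrime q'))) :
    x ∈ p.map (algebraMap R (Localization.AtPrime q)) := by
  obtain ⟨b, hb, hbx⟩ := memMapAux R p q' hpq hx
  obtain ⟨r, s, rfl⟩ := IsLocalization.exists_mk'_eq q.primeCompl x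
  rw [locMap_mk'] at hbx
  have hinj : Function.Injective (algebraMap R (Localization.AtPrime q')) :=
    IsLocalization.injective _ q'.primeCompl_le_nonZeroDivisors
  have hrbs : r = b * s := by
    apply hinj
    have := (IsLocalization.mk'_eq_iff_eq_mul (S := Localization.AtPrime q')
      (x := (RingHom.id R) r) (y := ⟨(RingHom.id R) s, _⟩)).mp hbx.symm
    simpa [map_mul] using this
  have hrp : r ∈ p := hrbs ▸ p.mul_mem_right _ hb
  obtain ⟨c, hc, hsc⟩ := divAux R p q (hpq.trans hq) hrp s.2
  have : IsLocalization.mk' (Localization.AtPrime q) r s = algebraMap R _ c := by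
    rw [IsLocalization.mk'_eq_iff_eq_mul, ← map_mul, mul_comm c, hsc]
  exact this ▸ Ideal.mem_map_of_mem _ hc

end Aux

set_option maxHeartbeats 1000000 in
set_option synthInstance.maxHeartbeats 400000 in
/-- For primes `p₁ ⊆ p₂ ⊆ p₁' ⊆ p₂'` of a valuation domain `R`, the square of canonical
maps between the rings `R_{p₂'}/p₁`, `R_{p₁'}/p₁`, `R_{p₂'}/p₂` and `R_{p₁'}/p₂` is a
pullback square of rings. -/
theorem stmt16 [IsDomain R] [ValuationRing R]
    (p₁ p₂ p₁' p₂' : Ideal R) [p₁.IsPrime] [p₂.IsPrime] [p₁'.IsPrime] [p₂'.IsPrime]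
    (h1 : p₁ ≤ p₂) (h2 : p₂ ≤ p₁') (h3 : p₁' ≤ p₂')
    (r₁ : Localization.AtPrime p₁' ⧸ p₁.map (algebraMap R (Localization.AtPrime p₁')))
    (r₂ : Localization.AtPrime p₂' ⧸ p₂.map (algebraMap R (Localization.AtPrime p₂')))
    (hcompat : vmap R p₁ p₂ p₁' p₁' le_rfl h1 r₁ = vmap R p₂ p₂ p₂' p₁' h3 le_rfl r₂) :
    ∃! r : Localization.AtPrime p₂' ⧸ p₁.map (algebraMap R (Localization.AtPrime p₂')),
      vmap R p₁ p₁ p₂' p₁' h3 le_rfl r = r₁ ∧ vmap R p₁ p₂ p₂' p₂' le_rfl h1 r = r₂ := by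
  obtain ⟨x₂, rfl⟩ := Ideal.Quotient.mk_surjective r₂
  obtain ⟨y₁, rfl⟩ := Ideal.Quotient.mk_surjective r₁
  simp only [vmap_mk] at hcompat
  have hid : locMap R p₁' p₁' le_rfl y₁ = y₁ := by
    simp only [locMap]; exact IsLocalization.map_id y₁ _
  rw [hid, Ideal.Quotient.eq] at hcompat
  obtain ⟨b, hb, hby⟩ := memMapAux R p₂ p₁' h2 hcompat
  have he : locMap R p₂' p₁' h3 (algebraMap R (Localization.AtPrime p₂') b) =
      algebraMap R (Localization.AtPrime p₁') b := by
    simp only [locMap]; exact IsLocalization.map_eq _ _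
  have key1 : vmap R p₁ p₁ p₂' p₁' h3 le_rfl
      (Ideal.Quotient.mk _ (x₂ + algebraMap R (Localization.AtPrime p₂') b)) =
      Ideal.Quotient.mk _ y₁ := by
    rw [vmap_mk, map_add, he, hby]
    exact congrArg _ (by ring)
  have key2 : vmap R p₁ p₂ p₂' p₂' le_rfl h1
      (Ideal.Quotient.mk _ (x₂ + algebraMap R (Localization.AtPrime p₂') b)) =
      Ideal.Quotient.mk _ x₂ := by
    rw [vmap_mk]
    have hid2 : locMap R p₂' p₂' le_rfl (x₂ + algebraMap R (Localization.AtPrime p₂') b) =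
        x₂ + algebraMap R (Localization.AtPrime p₂') b := by
      simp only [locMap]; exact IsLocalization.map_id _ _
    rw [hid2, Ideal.Quotient.eq]
    simpa using Ideal.mem_map_of_mem (algebraMap R (Localization.AtPrime p₂')) hb
  refine ⟨Ideal.Quotient.mk _ (x₂ + algebraMap R (Localization.AtPrime p₂') b),
    ⟨key1, key2⟩, ?_⟩
  rintro r' ⟨hr1, -⟩
  have hsub : vmap R p₁ p₁ p₂' p₁' h3 le_rfl
      (r' - Ideal.Quotient.mk _ (x₂ + algebraMap R (Localization.AtPrime p₂') b)) = 0 := by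
    rw [map_sub, hr1, key1, sub_self]
  obtain ⟨z, hz⟩ := Ideal.Quotient.mk_surjective
    (r' - Ideal.Quotient.mk _ (x₂ + algebraMap R (Localization.AtPrime p₂') b))
  rw [← hz] at hsub
  rw [vmap_mk] at hsub
  have hmem := kerAux R p₁ p₂' p₁' (h1.trans h2) h3
    (Ideal.Quotient.eq_zero_iff_mem.mp hsub)
  have h0 : Ideal.Quotient.mk (p₁.map (algebraMap R (Localization.AtPrime p₂'))) z = 0 :=
    Ideal.Quotient.eq_zero_iff_mem.mpr hmem
  rw [hz] at h0
  exact sub_eq_zero.mp h0
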